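/- Let n ≥ 2 and let (i_1,…,i_n) be a sequence of natural numbers with i_j ≥ 2 i_{j+1} for 1 ≤ j ≤ n−1. Write ω_{i_1,…,i_n} = Σ_j p_j x_n^j with coefficients p_j ∈ F_2[x_1,…,x_{n−1}]. Then p_j = 0 for all j < i_n, and p_{i_n} = ω_{i_1,…,i_{n−1}}. In other words, ω_{i_1,…,i_n} = ω_{i_1,…,i_{n−1}} x_n^{i_n} plus terms whose exponent of x_n strictly exceeds i_n. -/
import Mathlib


open MvPolynomial

/-- The field with two elements. -/
abbrev F2 := ZMod 2

/-- The polynomial ring `F_2[x_1, …, x_n]`. -/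
abbrev P2 (n : ℕ) := MvPolynomial (Fin n) F2

/-- The Dickson polynomial `ω_j`, viewed inside `F_2[x_1, …, x_n]` (for `j ≤ n`):
the product of all nonzero `F_2`-linear combinations of `x_1, …, x_j`. -/
noncomputable def omegaJ (n j : ℕ) (h : j ≤ n) : P2 n :=
  ∏ c ∈ Finset.univ.filter (fun c : Fin j → F2 => c ≠ 0),
    ∑ i : Fin j, MvPolynomial.C (c i) * MvPolynomial.X (Fin.castLE h i)

/-- `ω_{i_1, …, i_n} = ω_1^{i_1 - 2 i_2} ⋯ ω_{n-1}^{i_{n-1} - 2 i_n} ω_n^{i_n}`,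
with the convention `i_{n+1} = 0`. -/
noncomputable def omegaSeq (n : ℕ) (i : Fin n → ℕ) : P2 n :=
  ∏ j : Fin n,
    omegaJ n (j.val + 1) j.isLt ^
      (i j - 2 * (if h : j.val + 1 < n then i ⟨j.val + 1, h⟩ else 0))

/-! ### Auxiliary notions: order in the last variable -/

/-- Every monomial of `p` has exponent of the last variable at least `k`. -/
def XOrd (n k : ℕ) (p : P2 (n+1)) : Prop := ∀ d ∈ p.support, k ≤ d (Fin.last n)

lemma ord_zero (n k : ℕ) : XOrd n k (0 : P2 (n+1)) := by
  intro d hd; simp [MvPolynomial.support_zero] at hd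

lemma ord_mono {n k l : ℕ} {p : P2 (n+1)} (h : XOrd n k p) (hlk : l ≤ k) : XOrd n l p :=
  fun d hd => hlk.trans (h d hd)

lemma ord_any (n : ℕ) (p : P2 (n+1)) : XOrd n 0 p := fun _ _ => Nat.zero_le _

lemma ord_add {n k : ℕ} {p q : P2 (n+1)} (hp : XOrd n k p) (hq : XOrd n k q) :
    XOrd n k (p + q) := by
  intro d hd
  rcases Finset.mem_union.mp (MvPolynomial.support_add hd) with h | h
  · exact hp d h
  · exact hq d h

lemma ord_mul {n a b : ℕ} {p q : P2 (n+1)} (hp : XOrd n a p) (hq : XOrd n b q) :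
    XOrd n (a + b) (p * q) := by
  intro d hd
  rcases Finset.mem_add.mp (MvPolynomial.support_mul p q hd) with ⟨u, hu, v, hv, rfl⟩
  simpa using Nat.add_le_add (hp u hu) (hq v hv)

lemma ord_pow {n a : ℕ} {p : P2 (n+1)} (hp : XOrd n a p) (k : ℕ) :
    XOrd n (k * a) (p ^ k) := by
  induction k with
  | zero => simpa using ord_any n 1
  | succ k ih =>
      have := ord_mul ih hp
      rw [pow_succ]
      simpa [Nat.succ_mul] using this

lemma ord_X (n : ℕ) : XOrd n 1 (MvPolynomial.X (Fin.last n) : P2 (n+1)) := by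
  intro d hd
  rw [MvPolynomial.support_X] at hd
  simp at hd
  simp [hd]

lemma prod_ord {n : ℕ} {ι : Type*} [DecidableEq ι] (S : Finset ι) (g : ι → P2 (n+1))
    (h : P2 (n+1)) (hh : XOrd n 1 h) :
    ∃ s, ∏ t ∈ S, (g t + h) = (∏ t ∈ S, g t) + s ∧ XOrd n 1 s := by
  induction S using Finset.induction with
  | empty => exact ⟨0, by simp, ord_zero n 1⟩
  | @insert a S' ha ih =>
      obtain ⟨s, hs, hos⟩ := ih
      refine ⟨g a * s + (h * ∏ t ∈ S', g t + h * s), ?_, ?_⟩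
      · rw [Finset.prod_insert ha, Finset.prod_insert ha, hs]; ring
      · refine ord_add (by simpa using ord_mul (ord_any n (g a)) hos) (ord_add ?_ ?_)
        · simpa using ord_mul hh (ord_any n _)
        · exact ord_mono (ord_mul hh hos) (by omega)

lemma pow_ord {n : ℕ} {a s : P2 (n+1)} (ha : XOrd n 1 a) (hs : XOrd n 2 s) (k : ℕ) :
    ∃ t, (a + s) ^ k = a ^ k + t ∧ XOrd n (k + 1) t := by
  induction k with
  | zero => exact ⟨0, by simp, ord_zero n 1⟩
  | succ k ih =>
      obtain ⟨t, ht, hot⟩ := ih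
      refine ⟨a * t + (s * a ^ k + s * t), ?_, ?_⟩
      · rw [pow_succ, pow_succ, ht]; ring
      · refine ord_add ?_ (ord_add ?_ ?_)
        · simpa [Nat.add_comm] using ord_mul ha hot
        · have := ord_mul hs (ord_pow ha k)
          exact ord_mono (by simpa using this) (by omega)
        · exact ord_mono (ord_mul hs hot) (by omega)

/-! ### Structure of `ω` in the last variable -/

lemma omegaJ_rename (m j : ℕ) (h : j ≤ m) (hmm : m ≤ m + 1) (h2 : j ≤ m + 1) :
    MvPolynomial.rename (Fin.castLE hmm) (omegaJ m j h) = omegaJ (m+1) j h2 := by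
  unfold omegaJ
  rw [map_prod]
  refine Finset.prod_congr rfl fun c _ => ?_
  rw [map_sum]
  refine Finset.sum_congr rfl fun k _ => ?_
  rw [map_mul, rename_C, rename_X]
  rfl

lemma omega_top (m : ℕ) :
    ∃ s, omegaJ (m+1) (m+1) le_rfl =
      (omegaJ (m+1) m (Nat.le_succ m))^2 * MvPolynomial.X (Fin.last m) + s ∧ XOrd m 2 s := by
  classical
  set g : (Fin m → F2) → P2 (m+1) := fun c =>
    ∑ i : Fin m, MvPolynomial.C (c i) * MvPolynomial.X (Fin.castLE (Nat.le_succ m) i) with hg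
  set L : (Fin (m+1) → F2) → P2 (m+1) := fun c =>
    ∑ i : Fin (m+1), MvPolynomial.C (c i) * MvPolynomial.X (Fin.castLE le_rfl i) with hL
  have hLsnoc : ∀ (c' : Fin m → F2) (a : F2),
      L (Fin.snoc c' a) = g c' + MvPolynomial.C a * MvPolynomial.X (Fin.last m) := by
    intro c' a
    rw [hL]
    simp only [Fin.sum_univ_castSucc, Fin.snoc_castSucc, Fin.snoc_last]
    rfl
  -- split the product
  have hsplit : omegaJ (m+1) (m+1) le_rfl =
      (∏ c ∈ (Finset.univ.filter (fun c : Fin (m+1) → F2 => c ≠ 0)).filter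
          (fun c => c (Fin.last m) = 0), L c) *
      ∏ c ∈ (Finset.univ.filter (fun c : Fin (m+1) → F2 => c ≠ 0)).filter
          (fun c => ¬ c (Fin.last m) = 0), L c := by
    rw [omegaJ, Finset.prod_filter_mul_prod_filter_not]
  have hfirst : (∏ c ∈ (Finset.univ.filter (fun c : Fin (m+1) → F2 => c ≠ 0)).filter
          (fun c => c (Fin.last m) = 0), L c) = omegaJ (m+1) m (Nat.le_succ m) := by
    rw [omegaJ]
    refine Finset.prod_nbij' (fun c => c ∘ Fin.castSucc) (fun c' => Fin.snoc c' 0) ?_ ?_ ?_ ?_ ?_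
    · intro c hc
      simp only [Finset.mem_filter, Finset.mem_univ, true_and] at hc ⊢
      intro h0
      apply hc.1
      funext x
      rcases Fin.eq_castSucc_or_eq_last x with ⟨y, rfl⟩ | rfl
      · exact congrFun h0 y
      · exact hc.2
    · intro c' hc'
      simp only [Finset.mem_filter, Finset.mem_univ, true_and] at hc' ⊢
      constructor
      · intro h0
        apply hc'
        funext x
        have := congrFun h0 (Fin.castSucc x)
        simpa using this
      · simp
    · intro c hc
      simp only [Finset.mem_filter] at hc
      have : c = Fin.snoc (c ∘ Fin.castSucc) (c (Fin.last m)) := (Fin.snoc_init_self c).symm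
      rw [hc.2] at this
      exact this.symm
    · intro c' _
      funext x
      simp
    · intro c hc
      simp only [Finset.mem_filter] at hc
      conv_lhs => rw [← Fin.snoc_init_self c, hc.2, hLsnoc]
      simp [hg]
      rfl
  have hsecond : (∏ c ∈ (Finset.univ.filter (fun c : Fin (m+1) → F2 => c ≠ 0)).filter
          (fun c => ¬ c (Fin.last m) = 0), L c)
      = ∏ c' : Fin m → F2, (g c' + MvPolynomial.X (Fin.last m)) := by
    refine Finset.prod_nbij' (fun c => c ∘ Fin.castSucc) (fun c' => Fin.snoc c' 1) ?_ ?_ ?_ ?_ ?_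
    · intro c hc; exact Finset.mem_univ _
    · intro c' _
      simp only [Finset.mem_filter, Finset.mem_univ, true_and]
      constructor
      · intro h0
        have := congrFun h0 (Fin.last m)
        simp at this
      · simp
    · intro c hc
      simp only [Finset.mem_filter] at hc
      have hall : ∀ a : F2, a ≠ 0 → a = 1 := by decide
      have h1 : c (Fin.last m) = 1 := hall _ hc.2
      conv_rhs => rw [← Fin.snoc_init_self c, h1]
      rfl
    · intro c' _
      funext x
      simp
    · intro c hc
      simp only [Finset.mem_filter] at hc
      have hall : ∀ a : F2, a ≠ 0 → a = 1 := by decide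
      have h1 : c (Fin.last m) = 1 := hall _ hc.2
      conv_lhs => rw [← Fin.snoc_init_self c, h1, hLsnoc]
      simp only [map_one, one_mul]
      congr 1
  -- pull out c' = 0 from the full product
  have hzero : g 0 = 0 := by simp [hg]
  have hpull : (∏ c' : Fin m → F2, (g c' + MvPolynomial.X (Fin.last m)))
      = MvPolynomial.X (Fin.last m) *
        ∏ c' ∈ Finset.univ.filter (fun c' : Fin m → F2 => c' ≠ 0),
          (g c' + MvPolynomial.X (Fin.last m)) := by
    rw [Finset.filter_ne', ← Finset.mul_prod_erase Finset.univ _ (Finset.mem_univ 0), hzero,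
      zero_add]
  obtain ⟨s, hs, hos⟩ := prod_ord (Finset.univ.filter (fun c' : Fin m → F2 => c' ≠ 0)) g
    (MvPolynomial.X (Fin.last m)) (ord_X m)
  have hgprod : (∏ c' ∈ Finset.univ.filter (fun c' : Fin m → F2 => c' ≠ 0), g c')
      = omegaJ (m+1) m (Nat.le_succ m) := rfl
  refine ⟨omegaJ (m+1) m (Nat.le_succ m) * (MvPolynomial.X (Fin.last m) * s), ?_, ?_⟩
  · rw [hsplit, hfirst, hsecond, hpull, hs, hgprod]; ring
  · have h1 := ord_mul (ord_any m (omegaJ (m+1) m (Nat.le_succ m))) (ord_mul (ord_X m) hos)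
    simpa using h1

/-- For `n ≥ 2` and `i_j ≥ 2 i_{j+1}` (`1 ≤ j ≤ n-1`), writing
`ω_{i_1,…,i_n} = ∑_j p_j x_n^j` with `p_j ∈ F_2[x_1,…,x_{n-1}]`, one has `p_j = 0` for
`j < i_n` and `p_{i_n} = ω_{i_1,…,i_{n-1}}`; equivalently,
`ω_{i_1,…,i_n} = ω_{i_1,…,i_{n-1}} · x_n^{i_n} + r` where every monomial of `r` has
exponent of `x_n` strictly greater than `i_n`. -/
theorem omegaSeq_expansion_last_variable (n : ℕ) (hn : 2 ≤ n) (i : Fin n → ℕ)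
    (hcond : ∀ (j : Fin n) (h : j.val + 1 < n), 2 * i ⟨j.val + 1, h⟩ ≤ i j) :
    ∃ r : P2 n,
      omegaSeq n i =
        MvPolynomial.rename (Fin.castLE (Nat.sub_le n 1))
            (omegaSeq (n - 1) (fun j => i (Fin.castLE (Nat.sub_le n 1) j))) *
          MvPolynomial.X (⟨n - 1, by omega⟩ : Fin n) ^ i ⟨n - 1, by omega⟩ + r ∧
      ∀ d ∈ r.support, i (⟨n - 1, by omega⟩ : Fin n) < d ⟨n - 1, by omega⟩ := by
  obtain ⟨m, rfl⟩ : ∃ m, n = m + 2 := ⟨n - 2, by omega⟩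
  have hle : m + 1 ≤ m + 2 := by omega
  show ∃ r : P2 (m+2),
      omegaSeq (m+2) i =
        MvPolynomial.rename (Fin.castLE hle)
            (omegaSeq (m+1) (fun j => i (Fin.castLE hle j))) *
          MvPolynomial.X (Fin.last (m+1)) ^ i (Fin.last (m+1)) + r ∧
      ∀ d ∈ r.support, i (Fin.last (m+1)) < d (Fin.last (m+1))
  set k : ℕ := i (Fin.last (m+1)) with hk
  set B : P2 (m+2) := ∏ j : Fin (m+1),
    omegaJ (m+2) (j.val + 1) (by omega) ^
      (i (Fin.castSucc j) - 2 * i ⟨j.val + 1, by omega⟩) with hB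
  have step1 : omegaSeq (m+2) i = B * omegaJ (m+2) (m+2) le_rfl ^ k := by
    rw [omegaSeq, Fin.prod_univ_castSucc, hB]
    congr 1
    · refine Finset.prod_congr rfl fun j _ => ?_
      simp only [Fin.coe_castSucc]
      rw [dif_pos (show (j : ℕ) + 1 < m + 2 from Nat.succ_lt_succ j.isLt)]
    · simp only [Fin.val_last]
      rw [dif_neg (lt_irrefl (m+2))]
      rfl
  have step2 : MvPolynomial.rename (Fin.castLE hle)
      (omegaSeq (m+1) (fun j => i (Fin.castLE hle j)))
      = B * (omegaJ (m+2) (m+1) hle) ^ (2 * k) := by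
    have hif : ∀ j ∈ (Finset.univ : Finset (Fin (m+1))),
        MvPolynomial.rename (Fin.castLE hle)
          (omegaJ (m+1) (j.val + 1) j.isLt ^
            (i (Fin.castLE hle j) -
              2 * (if h : j.val + 1 < m + 1 then
                i (Fin.castLE hle ⟨j.val + 1, h⟩) else 0)))
        = omegaJ (m+2) (j.val + 1) (by omega) ^
            (i (Fin.castSucc j) - 2 * i ⟨j.val + 1, by omega⟩) *
          (if j = Fin.last m then omegaJ (m+2) (m+1) hle ^ (2 * k) else 1) := by
      intro j _
      rw [map_pow, omegaJ_rename (m+1) (j.val+1) j.isLt hle (by omega)]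
      by_cases hj : j = Fin.last m
      · subst hj
        rw [if_pos rfl]
        simp only [Fin.val_last]
        rw [dif_neg (lt_irrefl (m+1)), ← pow_add]
        congr 1
        have h2k : 2 * i (Fin.last (m+1)) ≤ i ((Fin.last m).castSucc) :=
          hcond ⟨m, by omega⟩ (show m + 1 < m + 2 by omega)
        show i ((Fin.last m).castSucc) - 2 * 0
          = i ((Fin.last m).castSucc) - 2 * i (Fin.last (m+1)) + 2 * k
        omega
      · rw [if_neg hj, mul_one, dif_pos (Nat.succ_lt_succ (Fin.val_lt_last hj))]
        rfl
    rw [omegaSeq, map_prod]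
    rw [Finset.prod_congr rfl hif, Finset.prod_mul_distrib, hB,
      Finset.prod_ite_eq' Finset.univ (Fin.last m), if_pos (Finset.mem_univ _)]
  obtain ⟨s, hs, hos⟩ := omega_top (m+1)
  have ha : XOrd (m+1) 1
      ((omegaJ (m+2) (m+1) (Nat.le_succ (m+1)))^2 * MvPolynomial.X (Fin.last (m+1))) := by
    have := ord_mul (ord_any (m+1) ((omegaJ (m+2) (m+1) (Nat.le_succ (m+1)))^2)) (ord_X (m+1))
    simpa using this
  obtain ⟨t, ht, hot⟩ := pow_ord ha hos k
  refine ⟨B * t, ?_, ?_⟩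
  · rw [step1, hs, ht]
    have key : B * ((omegaJ (m+2) (m+1) (Nat.le_succ (m+1)) ^ 2
          * MvPolynomial.X (Fin.last (m+1))) ^ k + t)
        = MvPolynomial.rename (Fin.castLE hle)
            (omegaSeq (m+1) (fun j => i (Fin.castLE hle j))) *
          MvPolynomial.X (Fin.last (m+1)) ^ k + B * t := by
      rw [mul_pow, ← pow_mul]
      have : omegaJ (m+2) (m+1) (Nat.le_succ (m+1)) = omegaJ (m+2) (m+1) hle := rfl
      rw [this, step2]
      ring
    exact key
  · intro d hd
    have := ord_mul (ord_any (m+1) B) hot d hd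
    simpa using this
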